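/- The function p(x) = (2x/π)·arccos(x/2) for 0 < x < 2 is a probability density with mean 32/(9π) and mean square 3/2. -/

import Mathlib

open Real MeasureTheory

private lemma cont_arccos_half : Continuous (fun x : ℝ => Real.arccos (x/2)) :=
  Real.continuous_arccos.comp (continuous_id.div_const 2)

private lemma cont_arcsin_half : Continuous (fun x : ℝ => Real.arcsin (x/2)) :=
  Real.continuous_arcsin.comp (continuous_id.div_const 2)

private lemma cont_sqrt4 : Continuous (fun x : ℝ => Real.sqrt (4 - x^2)) :=
  Real.continuous_sqrt.comp (by fun_prop)

private lemma sqrt_half {x : ℝ} (h0 : 0 < x) (h2 : x < 2) :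
    Real.sqrt (1 - (x/2)^2) = Real.sqrt (4 - x^2) / 2 := by
  have h4 : (0:ℝ) ≤ 4 - x^2 := by nlinarith
  rw [show (1 - (x/2)^2) = (4-x^2)/4 by ring, Real.sqrt_div h4,
    show Real.sqrt 4 = 2 by
      rw [show (4:ℝ) = 2^2 by norm_num, Real.sqrt_sq (by norm_num)]]

private lemma arccos_half_deriv {x : ℝ} (h0 : 0 < x) (h2 : x < 2) :
    HasDerivAt (fun y => Real.arccos (y/2)) (-(1 / Real.sqrt (4 - x^2))) x := by
  have h1 : x/2 ≠ -1 := by intro h; nlinarith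
  have h2' : x/2 ≠ 1 := by intro h; nlinarith
  have hd := (Real.hasDerivAt_arccos h1 h2').comp x ((hasDerivAt_id x).div_const 2)
  refine hd.congr_deriv (Eq.symm ?_)
  rw [sqrt_half h0 h2]
  have hs : Real.sqrt (4 - x^2) > 0 := Real.sqrt_pos.2 (by nlinarith)
  field_simp

private lemma arcsin_half_deriv {x : ℝ} (h0 : 0 < x) (h2 : x < 2) :
    HasDerivAt (fun y => Real.arcsin (y/2)) (1 / Real.sqrt (4 - x^2)) x := by
  have h1 : x/2 ≠ -1 := by intro h; nlinarith
  have h2' : x/2 ≠ 1 := by intro h; nlinarith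
  have hd := (Real.hasDerivAt_arcsin h1 h2').comp x ((hasDerivAt_id x).div_const 2)
  refine hd.congr_deriv (Eq.symm ?_)
  rw [sqrt_half h0 h2]
  have hs : Real.sqrt (4 - x^2) > 0 := Real.sqrt_pos.2 (by nlinarith)
  field_simp

private lemma sqrt_four_deriv {x : ℝ} (h0 : 0 < x) (h2 : x < 2) :
    HasDerivAt (fun y => Real.sqrt (4 - y^2)) (-x / Real.sqrt (4 - x^2)) x := by
  have hpos : (0:ℝ) < 4 - x^2 := by nlinarith
  have hd := (Real.hasDerivAt_sqrt (ne_of_gt hpos)).comp x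
    (((hasDerivAt_id x).pow 2).const_sub 4)
  refine hd.congr_deriv (Eq.symm ?_)
  have hs : Real.sqrt (4 - x^2) > 0 := Real.sqrt_pos.2 hpos
  field_simp
  simp only [id_eq]
  norm_num
  ring

private lemma I1 : (∫ x in (0:ℝ)..2, x * Real.arccos (x/2)) = π/2 := by
  have hcont : ContinuousOn (fun x : ℝ => x^2/2 * Real.arccos (x/2) + Real.arcsin (x/2)
      - x * Real.sqrt (4 - x^2) / 4) (Set.Icc 0 2) :=
    (((((continuous_pow 2).div_const 2).mul cont_arccos_half).add cont_arcsin_half).sub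
      ((continuous_id.mul cont_sqrt4).div_const 4)).continuousOn
  have hderiv : ∀ x ∈ Set.Ioo (0:ℝ) 2, HasDerivAt (fun x : ℝ => x^2/2 * Real.arccos (x/2)
      + Real.arcsin (x/2) - x * Real.sqrt (4 - x^2) / 4) (x * Real.arccos (x/2)) x := by
    intro x hx
    obtain ⟨h0, h2⟩ := hx
    have hs : Real.sqrt (4 - x^2) > 0 := Real.sqrt_pos.2 (by nlinarith)
    have hs2 : Real.sqrt (4 - x^2) ^ 2 = 4 - x^2 := Real.sq_sqrt (by nlinarith)
    have h4 : (4:ℝ) - x^2 ≠ 0 := by nlinarith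
    have hrw : 1 / Real.sqrt (4 - x^2) = Real.sqrt (4-x^2) / (4-x^2) := by
      rw [div_eq_div_iff hs.ne' h4]; nlinarith [hs2]
    have hrw2 : -x / Real.sqrt (4 - x^2) = (-x) * Real.sqrt (4-x^2) / (4-x^2) := by
      rw [div_eq_div_iff hs.ne' h4]; nlinarith [hs2]
    have hd := (((((hasDerivAt_id x).pow 2).div_const 2).mul
      (arccos_half_deriv h0 h2)).add (arcsin_half_deriv h0 h2)).sub
      (((hasDerivAt_id x).mul (sqrt_four_deriv h0 h2)).div_const 4)
    refine hd.congr_deriv (Eq.symm ?_)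
    simp only [id_eq, Pi.pow_apply, hrw, hrw2]
    field_simp
    ring
  have hint : IntervalIntegrable (fun x : ℝ => x * Real.arccos (x/2)) volume 0 2 :=
    (continuous_id.mul cont_arccos_half).intervalIntegrable 0 2
  have key := intervalIntegral.integral_eq_sub_of_hasDerivAt_of_le (by norm_num) hcont hderiv hint
  rw [key]
  norm_num [Real.arccos_one, Real.arcsin_one, Real.arcsin_zero]

private lemma I2 : (∫ x in (0:ℝ)..2, x^2 * Real.arccos (x/2)) = 16/9 := by
  have hcont : ContinuousOn (fun x : ℝ => x^3/3 * Real.arccos (x/2)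
      - 4 * Real.sqrt (4 - x^2) / 3 + Real.sqrt (4 - x^2) * (4 - x^2) / 9) (Set.Icc 0 2) :=
    (((((continuous_pow 3).div_const 3).mul cont_arccos_half).sub
      ((continuous_const.mul cont_sqrt4).div_const 3)).add
      ((cont_sqrt4.mul (by fun_prop)).div_const 9)).continuousOn
  have hderiv : ∀ x ∈ Set.Ioo (0:ℝ) 2, HasDerivAt (fun x : ℝ => x^3/3 * Real.arccos (x/2)
      - 4 * Real.sqrt (4 - x^2) / 3 + Real.sqrt (4 - x^2) * (4 - x^2) / 9)
      (x^2 * Real.arccos (x/2)) x := by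
    intro x hx
    obtain ⟨h0, h2⟩ := hx
    have hs : Real.sqrt (4 - x^2) > 0 := Real.sqrt_pos.2 (by nlinarith)
    have hs2 : Real.sqrt (4 - x^2) ^ 2 = 4 - x^2 := Real.sq_sqrt (by nlinarith)
    have h4 : (4:ℝ) - x^2 ≠ 0 := by nlinarith
    have hrw : 1 / Real.sqrt (4 - x^2) = Real.sqrt (4-x^2) / (4-x^2) := by
      rw [div_eq_div_iff hs.ne' h4]; nlinarith [hs2]
    have hrw2 : -x / Real.sqrt (4 - x^2) = (-x) * Real.sqrt (4-x^2) / (4-x^2) := by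
      rw [div_eq_div_iff hs.ne' h4]; nlinarith [hs2]
    have hd := ((((((hasDerivAt_id x).pow 3).div_const 3).mul
      (arccos_half_deriv h0 h2)).sub
      (((sqrt_four_deriv h0 h2).const_mul 4).div_const 3)).add
      (((sqrt_four_deriv h0 h2).mul (((hasDerivAt_id x).pow 2).const_sub 4)).div_const 9))
    refine hd.congr_deriv (Eq.symm ?_)
    simp only [id_eq, Pi.pow_apply, hrw, hrw2]
    field_simp
    ring
  have hint : IntervalIntegrable (fun x : ℝ => x^2 * Real.arccos (x/2)) volume 0 2 :=
    ((continuous_pow 2).mul cont_arccos_half).intervalIntegrable 0 2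
  have key := intervalIntegral.integral_eq_sub_of_hasDerivAt_of_le (by norm_num) hcont hderiv hint
  rw [key]
  have h4 : Real.sqrt 4 = 2 := by
    rw [show (4:ℝ) = 2^2 by norm_num, Real.sqrt_sq (by norm_num)]
  norm_num [Real.arccos_one, h4]
  try ring

private lemma I3 : (∫ x in (0:ℝ)..2, x^3 * Real.arccos (x/2)) = 3*π/4 := by
  have hcont : ContinuousOn (fun x : ℝ => x^4/4 * Real.arccos (x/2)
      + 3/2 * Real.arcsin (x/2) - (6*x + x^3) * Real.sqrt (4 - x^2) / 16) (Set.Icc 0 2) :=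
    (((((continuous_pow 4).div_const 4).mul cont_arccos_half).add
      (continuous_const.mul cont_arcsin_half)).sub
      (((by fun_prop : Continuous fun x : ℝ => 6*x + x^3).mul cont_sqrt4).div_const 16)).continuousOn
  have hderiv : ∀ x ∈ Set.Ioo (0:ℝ) 2, HasDerivAt (fun x : ℝ => x^4/4 * Real.arccos (x/2)
      + 3/2 * Real.arcsin (x/2) - (6*x + x^3) * Real.sqrt (4 - x^2) / 16)
      (x^3 * Real.arccos (x/2)) x := by
    intro x hx
    obtain ⟨h0, h2⟩ := hx
    have hs : Real.sqrt (4 - x^2) > 0 := Real.sqrt_pos.2 (by nlinarith)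
    have hs2 : Real.sqrt (4 - x^2) ^ 2 = 4 - x^2 := Real.sq_sqrt (by nlinarith)
    have h4 : (4:ℝ) - x^2 ≠ 0 := by nlinarith
    have hrw : 1 / Real.sqrt (4 - x^2) = Real.sqrt (4-x^2) / (4-x^2) := by
      rw [div_eq_div_iff hs.ne' h4]; nlinarith [hs2]
    have hrw2 : -x / Real.sqrt (4 - x^2) = (-x) * Real.sqrt (4-x^2) / (4-x^2) := by
      rw [div_eq_div_iff hs.ne' h4]; nlinarith [hs2]
    have hpoly : HasDerivAt (fun y : ℝ => 6*y + y^3) (6*1 + 3 * x^(3-1) * 1) x :=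
      ((hasDerivAt_id x).const_mul 6).add ((hasDerivAt_id x).pow 3)
    have hd := ((((((hasDerivAt_id x).pow 4).div_const 4).mul
      (arccos_half_deriv h0 h2)).add
      ((arcsin_half_deriv h0 h2).const_mul (3/2))).sub
      ((hpoly.mul (sqrt_four_deriv h0 h2)).div_const 16))
    refine hd.congr_deriv (Eq.symm ?_)
    simp only [id_eq, Pi.pow_apply, hrw, hrw2]
    field_simp
    ring
  have hint : IntervalIntegrable (fun x : ℝ => x^3 * Real.arccos (x/2)) volume 0 2 :=
    ((continuous_pow 3).mul cont_arccos_half).intervalIntegrable 0 2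
  have key := intervalIntegral.integral_eq_sub_of_hasDerivAt_of_le (by norm_num) hcont hderiv hint
  rw [key]
  norm_num [Real.arccos_one, Real.arcsin_one, Real.arcsin_zero]
  try ring

private lemma ioo_eq (f : ℝ → ℝ) :
    (∫ x in Set.Ioo (0:ℝ) 2, f x) = ∫ x in (0:ℝ)..2, f x := by
  rw [intervalIntegral.integral_of_le (by norm_num), MeasureTheory.integral_Ioc_eq_integral_Ioo]

theorem pinned_a_div_b_density :
    (∫ x in Set.Ioo (0:ℝ) 2, (2 * x / π) * Real.arccos (x / 2)) = 1 ∧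
    (∫ x in Set.Ioo (0:ℝ) 2, x * ((2 * x / π) * Real.arccos (x / 2))) = 32 / (9 * π) ∧
    (∫ x in Set.Ioo (0:ℝ) 2, x ^ 2 * ((2 * x / π) * Real.arccos (x / 2))) = 3 / 2 := by
  have hπ : π ≠ 0 := Real.pi_ne_zero
  refine ⟨?_, ?_, ?_⟩
  · rw [ioo_eq]
    have h : ∀ x : ℝ, (2 * x / π) * Real.arccos (x / 2) = (2/π) * (x * Real.arccos (x/2)) :=
      fun x => by ring
    simp_rw [h]
    rw [intervalIntegral.integral_const_mul, I1]
    field_simp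
  · rw [ioo_eq]
    have h : ∀ x : ℝ, x * ((2 * x / π) * Real.arccos (x / 2))
        = (2/π) * (x^2 * Real.arccos (x/2)) := fun x => by ring
    simp_rw [h]
    rw [intervalIntegral.integral_const_mul, I2]
    field_simp
    ring
  · rw [ioo_eq]
    have h : ∀ x : ℝ, x^2 * ((2 * x / π) * Real.arccos (x / 2))
        = (2/π) * (x^3 * Real.arccos (x/2)) := fun x => by ring
    simp_rw [h]
    rw [intervalIntegral.integral_const_mul, I3]
    field_simp
    ring
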